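/- Let H₀, H₁ be graphs with V(H₀) ∩ V(H₁) = U, |U| ≥ 3, and E(H₀) ∩ E(H₁) = ∅. Let H₂ be a wheel with U as its set of rim vertices, V(H₀) ∩ V(H₂) = U and E(H₀) ∩ E(H₂) = ∅. Put G₁ = H₀ ∪ H₁ and G₂ = H₀ ∪ H₂. Suppose G₁ is 3-connected and each vertex of U has degree at least four in G₂. Then G₂ − e is 3-connected for some edge e on the rim of H₂. -/

import Mathlib

open scoped Classical

noncomputable section

/-- The subfield generated by a subfield `K` and an element `x`. -/
def Subfield.adjoinEl {F : Type*} [Field F] (K : Subfield F) (x : F) : Subfield F :=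
  Subfield.closure (↑K ∪ {x})

/-- `M` is a radical extension of `K`: there is a tower
`K = K₁ ⊆ K₂ ⊆ … ⊆ K_t = M` with `K_{i+1} = K_i(x_i)` and `x_i ^ n_i ∈ K_i`. -/
def IsRadicalExtension {F : Type*} [Field F] (K M : Subfield F) : Prop :=
  ∃ t : ℕ, ∃ c : Fin (t + 1) → Subfield F,
    c 0 = K ∧ c (Fin.last t) = M ∧
    ∀ i : Fin t, ∃ x : F, ∃ n : ℕ, 0 < n ∧ x ^ n ∈ c i.castSucc ∧
      c i.succ = (c i.castSucc).adjoinEl x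

/-- `M` is a quadratic extension of `K`: a radical extension with all `n_i = 2`. -/
def IsQuadraticExtension {F : Type*} [Field F] (K M : Subfield F) : Prop :=
  ∃ t : ℕ, ∃ c : Fin (t + 1) → Subfield F,
    c 0 = K ∧ c (Fin.last t) = M ∧
    ∀ i : Fin t, ∃ x : F, x ^ 2 ∈ c i.castSucc ∧
      c i.succ = (c i.castSucc).adjoinEl x

/-- `L : K` is radically solvable if `L` is contained in a radical extension of `K`. -/
def RadicallySolvable {F : Type*} [Field F] (K L : Subfield F) : Prop :=
  ∃ M : Subfield F, L ≤ M ∧ IsRadicalExtension K M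

/-- `L : K` is quadratically solvable if `L` is contained in a quadratic extension of `K`. -/
def QuadraticallySolvable {F : Type*} [Field F] (K L : Subfield F) : Prop :=
  ∃ M : Subfield F, L ≤ M ∧ IsQuadraticExtension K M

/-- A finite graph: a finite set of vertices (natural numbers) and of edges. -/
structure FinGraph : Type where
  verts : Finset ℕ
  edges : Finset (Sym2 ℕ)

namespace FinGraph

/-- A graph is well-formed if it has no loops and edges join vertices. -/
def WellFormed (G : FinGraph) : Prop :=
  (∀ e ∈ G.edges, ¬ e.IsDiag) ∧ (∀ e ∈ G.edges, ∀ v ∈ e, v ∈ G.verts)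

def union (G H : FinGraph) : FinGraph := ⟨G.verts ∪ H.verts, G.edges ∪ H.edges⟩

def addEdge (G : FinGraph) (u v : ℕ) : FinGraph := ⟨G.verts, insert s(u, v) G.edges⟩

def deleteEdge (G : FinGraph) (e : Sym2 ℕ) : FinGraph := ⟨G.verts, G.edges.erase e⟩

end FinGraph

/-- `d_p(u,v) = a² + b²` where `(a,b) = p u - p v`. -/
def sqDist {R : Type*} [CommRing R] (p : ℕ → R × R) (u v : ℕ) : R :=
  ((p u).1 - (p v).1) ^ 2 + ((p u).2 - (p v).2) ^ 2

/-- Two frameworks are equivalent if corresponding edges have equal squared lengths. -/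
def FEquiv {R : Type*} [CommRing R] (G : FinGraph) (p q : ℕ → R × R) : Prop :=
  ∀ u v : ℕ, s(u, v) ∈ G.edges → sqDist p u v = sqDist q u v

/-- Two frameworks are congruent if all pairs of vertices have equal squared distances. -/
def FCong {R : Type*} [CommRing R] (G : FinGraph) (p q : ℕ → R × R) : Prop :=
  ∀ u ∈ G.verts, ∀ v ∈ G.verts, sqDist p u v = sqDist q u v

/-- A framework is generic if the coordinates of its points are
algebraically independent over `ℚ`. -/
def FGeneric {R : Type*} [CommRing R] [Algebra ℚ R] (G : FinGraph) (p : ℕ → R × R) : Prop :=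
  AlgebraicIndependent ℚ
    (fun vb : {x // x ∈ G.verts} × Bool => if vb.2 then (p vb.1.1).2 else (p vb.1.1).1)

/-- A complex framework is quasi-generic if it is congruent to a generic one. -/
def QuasiGeneric (G : FinGraph) (p : ℕ → ℂ × ℂ) : Prop :=
  ∃ p' : ℕ → ℂ × ℂ, FGeneric G p' ∧ FCong G p p'

/-- A real framework is rigid if all equivalent frameworks near it are congruent to it. -/
def RigidFramework (G : FinGraph) (p : ℕ → ℝ × ℝ) : Prop :=
  ∃ ε : ℝ, 0 < ε ∧ ∀ q : ℕ → ℝ × ℝ, FEquiv G p q →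
    (∀ v ∈ G.verts, ((p v).1 - (q v).1) ^ 2 + ((p v).2 - (q v).2) ^ 2 < ε) →
    FCong G p q

/-- A graph is rigid if every generic real realisation is rigid. -/
def FinGraph.Rigid (G : FinGraph) : Prop :=
  ∀ p : ℕ → ℝ × ℝ, FGeneric G p → RigidFramework G p

/-- A graph is minimally rigid if it is rigid but ceases to be so on deleting any edge. -/
def FinGraph.MinimallyRigid (G : FinGraph) : Prop :=
  G.Rigid ∧ ∀ e ∈ G.edges, ¬ (G.deleteEdge e).Rigid

/-- A graph is globally rigid if for every generic complex realisation every
equivalent realisation is congruent to it. -/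
def FinGraph.GloballyRigid (G : FinGraph) : Prop :=
  ∀ p : ℕ → ℂ × ℂ, FGeneric G p → ∀ q : ℕ → ℂ × ℂ, FEquiv G p q → FCong G p q

/-- `ℚ(p)`: the subfield of `ℂ` generated by the coordinates of the points of `p`. -/
def coordField (G : FinGraph) (p : ℕ → ℂ × ℂ) : Subfield ℂ :=
  Subfield.closure {z : ℂ | ∃ v ∈ G.verts, z = (p v).1 ∨ z = (p v).2}

/-- `ℚ(d_G(p))`: the subfield of `ℂ` generated by the squared edge lengths of `(G,p)`. -/
def distField (G : FinGraph) (p : ℕ → ℂ × ℂ) : Subfield ℂ :=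
  Subfield.closure {z : ℂ | ∃ u v : ℕ, s(u, v) ∈ G.edges ∧ z = sqDist p u v}

/-- A complex framework is radically solvable if some congruent framework `(G,q)`
has `ℚ(q) : ℚ(d_G(q))` radically solvable. -/
def RadSolvableFramework (G : FinGraph) (p : ℕ → ℂ × ℂ) : Prop :=
  ∃ q : ℕ → ℂ × ℂ, FCong G p q ∧ RadicallySolvable (distField G q) (coordField G q)

def QuadSolvableFramework (G : FinGraph) (p : ℕ → ℂ × ℂ) : Prop :=
  ∃ q : ℕ → ℂ × ℂ, FCong G p q ∧ QuadraticallySolvable (distField G q) (coordField G q)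

/-- A graph is radically solvable if every generic realisation is radically solvable. -/
def FinGraph.RadSolvable (G : FinGraph) : Prop :=
  ∀ p : ℕ → ℂ × ℂ, FGeneric G p → RadSolvableFramework G p

/-- A graph is quadratically solvable if every generic realisation is so. -/
def FinGraph.QuadSolvable (G : FinGraph) : Prop :=
  ∀ p : ℕ → ℂ × ℂ, FGeneric G p → QuadSolvableFramework G p

/-- Standard position with respect to `(v₁, v₂)`: `p v₁ = (0,0)` and `p v₂ = (0,z)`. -/
def StdPos (p : ℕ → ℂ × ℂ) (v₁ v₂ : ℕ) : Prop :=
  p v₁ = (0, 0) ∧ (p v₂).1 = 0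

/-- The cyclically next index on the rim. -/
def rimNext {m : ℕ} (i : Fin m) : Fin m :=
  ⟨(i.val + 1) % m, Nat.mod_lt _ (Nat.lt_of_le_of_lt (Nat.zero_le i.val) i.isLt)⟩

/-- `W` is a wheel with hub `hub` and rim `u 0, u 1, …, u (m-1)` (so `W` has `m + 1 ≥ 4`
vertices). -/
def IsWheel (W : FinGraph) (hub : ℕ) (m : ℕ) (u : Fin m → ℕ) : Prop :=
  3 ≤ m ∧ Function.Injective u ∧ (∀ i, u i ≠ hub) ∧
  W.verts = insert hub (Finset.image u Finset.univ) ∧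
  W.edges = Finset.image (fun i => s(hub, u i)) Finset.univ ∪
    Finset.image (fun i => s(u i, u (rimNext i))) Finset.univ

/-- The degree of a vertex. -/
def FinGraph.degree (G : FinGraph) (v : ℕ) : ℕ := (G.edges.filter (fun e => v ∈ e)).card

/-- Deletion of a set of vertices (and all edges meeting it). -/
def FinGraph.deleteVerts (G : FinGraph) (S : Finset ℕ) : FinGraph :=
  ⟨G.verts \ S, G.edges.filter (fun e => ∀ v ∈ e, v ∉ S)⟩

/-- A graph is connected if it has a vertex and all vertices are joined by walks. -/
def FinGraph.Connected (G : FinGraph) : Prop :=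
  G.verts.Nonempty ∧
    ∀ u ∈ G.verts, ∀ v ∈ G.verts,
      Relation.ReflTransGen (fun a b => s(a, b) ∈ G.edges) u v

/-- `G` is `k`-connected if `|V| ≥ k + 1` and deleting fewer than `k` vertices leaves
a connected graph. -/
def FinGraph.KConnected (k : ℕ) (G : FinGraph) : Prop :=
  k + 1 ≤ G.verts.card ∧
    ∀ S : Finset ℕ, S ⊆ G.verts → S.card < k → (G.deleteVerts S).Connected

open Fin.NatCast

def Reach (G : FinGraph) (a b : ℕ) : Prop :=
  Relation.ReflTransGen (fun x y => s(x, y) ∈ G.edges) a b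

lemma Reach.symm2 {G : FinGraph} {a b : ℕ} (h : Reach G a b) : Reach G b a := by
  have hs : Symmetric (fun x y : ℕ => s(x, y) ∈ G.edges) := by
    intro x y hxy
    simpa [Sym2.eq_swap] using hxy
  letI : Std.Symm (fun x y : ℕ => s(x, y) ∈ G.edges) := ⟨hs⟩
  exact (Relation.ReflTransGen.symmetric (r := fun x y : ℕ => s(x, y) ∈ G.edges)).symm _ _ h

lemma Reach.mono2 {G G' : FinGraph} (hsub : ∀ x y : ℕ, s(x, y) ∈ G.edges → s(x, y) ∈ G'.edges)
    {a b : ℕ} (h : Reach G a b) : Reach G' a b :=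
  Relation.ReflTransGen.mono (fun x y hxy => hsub x y hxy) _ _ h

lemma Reach.single {G : FinGraph} {a b : ℕ} (h : s(a, b) ∈ G.edges) : Reach G a b :=
  Relation.ReflTransGen.single h

lemma mem_deleteVerts_edges {G : FinGraph} {S : Finset ℕ} {a b : ℕ} :
    s(a, b) ∈ (G.deleteVerts S).edges ↔ s(a, b) ∈ G.edges ∧ a ∉ S ∧ b ∉ S := by
  constructor
  · intro h
    simp only [FinGraph.deleteVerts, Finset.mem_filter] at h
    exact ⟨h.1, h.2 a (by simp), h.2 b (by simp)⟩
  · rintro ⟨h1, h2, h3⟩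
    simp only [FinGraph.deleteVerts, Finset.mem_filter]
    refine ⟨h1, ?_⟩
    intro v hv
    rw [Sym2.mem_iff] at hv
    rcases hv with rfl | rfl <;> assumption

lemma mem_deleteEdge_edges {G : FinGraph} {e g : Sym2 ℕ} :
    g ∈ (G.deleteEdge e).edges ↔ g ≠ e ∧ g ∈ G.edges := by
  simp [FinGraph.deleteEdge, Finset.mem_erase]

lemma mem_union_edges {G H : FinGraph} {g : Sym2 ℕ} :
    g ∈ (G.union H).edges ↔ g ∈ G.edges ∨ g ∈ H.edges := by
  simp [FinGraph.union]

/-- Lemma: replacing a subgraph by a wheel on the attachment vertices preserves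
3-connectivity after deleting a suitable rim edge. -/
theorem statement14 (H₀ H₁ H₂ : FinGraph)
    (hw0 : H₀.WellFormed) (hw1 : H₁.WellFormed) (hw2 : H₂.WellFormed)
    (U : Finset ℕ) (hU : 3 ≤ U.card)
    (hV01 : H₀.verts ∩ H₁.verts = U) (hE01 : H₀.edges ∩ H₁.edges = ∅)
    (hub m : ℕ) (u : Fin m → ℕ)
    (hwheel : IsWheel H₂ hub m u) (hrim : Finset.image u Finset.univ = U)
    (hV02 : H₀.verts ∩ H₂.verts = U) (hE02 : H₀.edges ∩ H₂.edges = ∅)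
    (h3conn : FinGraph.KConnected 3 (H₀.union H₁))
    (hdeg : ∀ w ∈ U, 4 ≤ (H₀.union H₂).degree w) :
    ∃ i : Fin m,
      FinGraph.KConnected 3 ((H₀.union H₂).deleteEdge s(u i, u (rimNext i))) := by
  classical
  obtain ⟨hm3, huinj, hune, hV2, hE2⟩ := hwheel
  have hm0 : 0 < m := by omega
  haveI : NeZero m := ⟨by omega⟩
  set G2 : FinGraph := H₀.union H₂ with hG2def
  set v : ℕ → ℕ := fun t => u ((t : Fin m)) with hvdef
  -- basic value facts
  have hvval : ∀ t : ℕ, ((t : Fin m) : ℕ) = t % m := fun t => Fin.val_natCast t m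
  have hvcongr : ∀ {a b : ℕ}, a % m = b % m → v a = v b := by
    intro a b h
    simp only [hvdef]
    congr 1
    apply Fin.ext
    rw [hvval, hvval, h]
  have hvinj : ∀ {a b : ℕ}, v a = v b → a % m = b % m := by
    intro a b h
    have := huinj h
    have := congrArg Fin.val this
    rwa [hvval, hvval] at this
  have huv : ∀ j : Fin m, u j = v j.val := by
    intro j
    simp only [hvdef, Fin.cast_val_eq_self]
  have hval_add_one : ∀ j : Fin m, (j + 1).val = (j.val + 1) % m := by
    intro j
    rw [Fin.add_def]
    congr 1
    have h2 : ((1 : Fin m) : ℕ) = 1 % m := by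
      have := hvval 1; simpa using this
    rw [h2, Nat.mod_eq_of_lt (show (1:ℕ) < m by omega)]
  have husucc : ∀ j : Fin m, u (j + 1) = v (j.val + 1) := by
    intro j
    rw [huv]
    apply hvcongr
    rw [hval_add_one, Nat.mod_mod]
  -- structural facts
  have hUeq : U = Finset.image u Finset.univ := hrim.symm
  have hjU : ∀ j : Fin m, u j ∈ U := by
    intro j; rw [hUeq]; exact Finset.mem_image_of_mem _ (Finset.mem_univ _)
  have hU0 : ∀ j : Fin m, u j ∈ H₀.verts := by
    intro j
    have h := hjU j
    rw [← hV02] at h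
    exact (Finset.mem_inter.1 h).1
  have hhub2 : hub ∈ H₂.verts := by rw [hV2]; exact Finset.mem_insert_self _ _
  have hhub0 : hub ∉ H₀.verts := by
    intro h
    have : hub ∈ U := by rw [← hV02]; exact Finset.mem_inter.2 ⟨h, hhub2⟩
    rw [hUeq] at this
    obtain ⟨j, _, hj⟩ := Finset.mem_image.1 this
    exact hune j hj
  have hG2verts : G2.verts = H₀.verts ∪ H₂.verts := rfl
  have hG2edges : ∀ {g : Sym2 ℕ}, g ∈ G2.edges ↔ g ∈ H₀.edges ∨ g ∈ H₂.edges := fun {g} =>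
    mem_union_edges
  have hvverts : ∀ a : ℕ, v a ∈ G2.verts := by
    intro a
    exact Finset.mem_union_left _ (hU0 _)
  have hhubverts : hub ∈ G2.verts := Finset.mem_union_right _ hhub2
  have hvhub : ∀ a : ℕ, v a ≠ hub := fun a => hune _
  have hwG2 : G2.WellFormed := by
    constructor
    · intro g hg
      rcases hG2edges.1 hg with h | h
      · exact hw0.1 g h
      · exact hw2.1 g h
    · intro g hg x hx
      rcases hG2edges.1 hg with h | h
      · exact Finset.mem_union_left _ (hw0.2 g h x hx)
      · exact Finset.mem_union_right _ (hw2.2 g h x hx)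
  have hH0H2 : ∀ g ∈ H₀.edges, g ∉ H₂.edges := by
    intro g hg hg2
    have : g ∈ H₀.edges ∩ H₂.edges := Finset.mem_inter.2 ⟨hg, hg2⟩
    rw [hE02] at this
    exact absurd this (Finset.notMem_empty g)
  have hrimNextv : ∀ t : ℕ, rimNext ((t : Fin m)) = ((t+1 : ℕ) : Fin m) := by
    intro t
    apply Fin.ext
    show ((t : Fin m).val + 1) % m = ((t+1 : ℕ) : Fin m).val
    rw [hvval, hvval]
    conv_rhs => rw [Nat.add_mod, Nat.mod_eq_of_lt (show (1:ℕ) < m by omega)]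
  have hspokeH2 : ∀ t : ℕ, s(hub, v t) ∈ H₂.edges := by
    intro t
    rw [hE2]
    exact Finset.mem_union_left _ (Finset.mem_image_of_mem _ (Finset.mem_univ _))
  have hrimH2 : ∀ t : ℕ, s(v t, v (t+1)) ∈ H₂.edges := by
    intro t
    rw [hE2]
    apply Finset.mem_union_right
    apply Finset.mem_image.2
    refine ⟨(t : Fin m), Finset.mem_univ _, ?_⟩
    rw [hrimNextv t]
  have hspokeG2 : ∀ t : ℕ, s(hub, v t) ∈ G2.edges := fun t =>
    hG2edges.2 (Or.inr (hspokeH2 t))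
  have hrimG2 : ∀ t : ℕ, s(v t, v (t+1)) ∈ G2.edges := fun t =>
    hG2edges.2 (Or.inr (hrimH2 t))
  have hspokeuH2 : ∀ j : Fin m, s(hub, u j) ∈ H₂.edges := by
    intro j; rw [huv j]; exact hspokeH2 _
  -- arithmetic helpers
  have hcancel : ∀ a r s' : ℕ, (a + r) % m = (a + s') % m → r % m = s' % m := by
    intro a r s' h
    exact Nat.ModEq.add_left_cancel' a h
  have hmodsmall : ∀ {r s' : ℕ}, r < m → s' < m → r % m = s' % m → r = s' := by
    intro r s' h1 h2 h
    rwa [Nat.mod_eq_of_lt h1, Nat.mod_eq_of_lt h2] at h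
  have hvadd : ∀ a r s' : ℕ, r < m → s' < m → v (a + r) = v (a + s') → r = s' := by
    intro a r s' h1 h2 h
    exact hmodsmall h1 h2 (hcancel a r s' (hvinj h))
  have hvperiod : ∀ a : ℕ, v (a + m) = v a := by
    intro a
    apply hvcongr
    simp [Nat.add_mod_right]
  have hvmod : ∀ a : ℕ, v (a % m) = v a := fun a => hvcongr (Nat.mod_mod_of_dvd a dvd_rfl)
  have hmod2f : ∀ a : ℕ, (a + 2) % m = a % m → False := by
    intro a h
    have h2 : a % m = (a + 2) % m := h.symm
    have hdvd : m ∣ (a + 2) - a := (Nat.modEq_iff_dvd' (by omega)).1 h2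
    have : m ∣ 2 := by simpa using hdvd
    have := Nat.le_of_dvd (by norm_num) this
    omega
  have hrimeq : ∀ a b : ℕ, s(v a, v (a+1)) = s(v b, v (b+1)) → a % m = b % m := by
    intro a b h
    rcases Sym2.eq_iff.1 h with ⟨h1, _⟩ | ⟨h1, h2⟩
    · exact hvinj h1
    · -- v a = v (b+1), v (a+1) = v b : impossible
      exfalso
      have e1 : a % m = (b+1) % m := hvinj h1
      have e2 : (a+1) % m = b % m := hvinj h2
      have e3 : (b + 2) % m = b % m := by
        have : (b + 1 + 1) % m = (a + 1) % m := by
          conv_lhs => rw [Nat.add_mod, ← e1, ← Nat.add_mod]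
        rw [show b + 2 = b + 1 + 1 by omega, this, e2]
      exact hmod2f b e3
  have hrimne : ∀ a b : ℕ, a % m ≠ b % m → s(v a, v (a+1)) ≠ s(v b, v (b+1)) := by
    intro a b h heq
    exact h (hrimeq a b heq)
  -- hub edge classification
  have hhubedge : ∀ g ∈ G2.edges, hub ∈ g → ∃ j : Fin m, g = s(hub, u j) := by
    intro g hg hmemhub
    rcases hG2edges.1 hg with h | h
    · exact absurd (hw0.2 g h hub hmemhub) hhub0
    · rw [hE2] at h
      rcases Finset.mem_union.1 h with h' | h'
      · obtain ⟨j, _, rfl⟩ := Finset.mem_image.1 h'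
        exact ⟨j, rfl⟩
      · obtain ⟨j, _, rfl⟩ := Finset.mem_image.1 h'
        rw [Sym2.mem_iff] at hmemhub
        rcases hmemhub with h'' | h''
        · exact absurd h''.symm (hune j)
        · exact absurd h''.symm (hune _)
  -- edge insertion helpers
  have hGedge : ∀ (E : Sym2 ℕ) (S : Finset ℕ) (a b : ℕ), s(a,b) ∈ G2.edges → s(a,b) ≠ E →
      a ∉ S → b ∉ S → s(a,b) ∈ ((G2.deleteEdge E).deleteVerts S).edges := by
    intro E S a b h1 h2 h3 h4
    exact mem_deleteVerts_edges.2 ⟨mem_deleteEdge_edges.2 ⟨h2, h1⟩, h3, h4⟩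
  have hGedge2 : ∀ (S : Finset ℕ) (a b : ℕ), s(a,b) ∈ G2.edges →
      a ∉ S → b ∉ S → s(a,b) ∈ (G2.deleteVerts S).edges := by
    intro S a b h1 h3 h4
    exact mem_deleteVerts_edges.2 ⟨h1, h3, h4⟩
  -- generic rim path
  have RIMPATH : ∀ (G : FinGraph) (st n : ℕ),
      (∀ q, q < n → s(v (st + q), v (st + q + 1)) ∈ G.edges) →
      Reach G (v st) (v (st + n)) := by
    intro G st n
    induction n with
    | zero => intro _; exact Relation.ReflTransGen.refl
    | succ k ih =>
      intro hE
      have h1 := ih (fun q hq => hE q (by omega))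
      have h2 : s(v (st + k), v (st + k + 1)) ∈ G.edges := hE k (by omega)
      have h3 : st + (k + 1) = st + k + 1 := by omega
      rw [h3]
      exact Relation.ReflTransGen.tail h1 h2
  -- arcs in (G2 - E) - S
  have ARC : ∀ (E : Sym2 ℕ) (S : Finset ℕ) (st n : ℕ),
      (∀ q, q < n → s(v (st + q), v (st + q + 1)) ≠ E) →
      (∀ q, q ≤ n → v (st + q) ∉ S) →
      Reach ((G2.deleteEdge E).deleteVerts S) (v st) (v (st + n)) := by
    intro E S st n hne hns
    apply RIMPATH
    intro q hq
    exact hGedge E S _ _ (hrimG2 (st + q)) (hne q hq) (hns q (by omega)) (hns (q+1) (by omega))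
  have ARC2 : ∀ (S : Finset ℕ) (st n : ℕ),
      (∀ q, q ≤ n → v (st + q) ∉ S) →
      Reach (G2.deleteVerts S) (v st) (v (st + n)) := by
    intro S st n hns
    apply RIMPATH
    intro q hq
    exact hGedge2 S _ _ (hrimG2 (st + q)) (hns q (by omega)) (hns (q+1) (by omega))
  -- the key consequence of 3-connectivity of G1
  have DAGGER : ∀ (S : Finset ℕ), S.card ≤ 2 → ∀ x ∈ H₀.verts, x ∉ S →
      ∃ j : Fin m, u j ∉ S ∧ Reach (H₀.deleteVerts S) x (u j) := by
    intro S hS x hx hxS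
    set S' := S ∩ (H₀.union H₁).verts with hS'def
    have hcard' : S'.card < 3 :=
      lt_of_le_of_lt (le_trans (Finset.card_le_card Finset.inter_subset_left) hS) (by omega)
    have hconn := h3conn.2 S' Finset.inter_subset_right hcard'
    -- a target vertex of U outside S
    have hUS : ∃ w ∈ U, w ∉ S := by
      by_contra hcon
      push_neg at hcon
      have : U ⊆ S := fun w hw => hcon w hw
      have := Finset.card_le_card this
      omega
    obtain ⟨w, hwU, hwS⟩ := hUS
    obtain ⟨jw, _, hjw⟩ := Finset.mem_image.1 (hUeq ▸ hwU)
    have hw0' : w ∈ H₀.verts := by rw [← hV02] at hwU; exact (Finset.mem_inter.1 hwU).1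
    have hxin : x ∈ (H₀.union H₁).verts := Finset.mem_union_left _ hx
    have hwin : w ∈ (H₀.union H₁).verts := Finset.mem_union_left _ hw0'
    have hxS' : x ∈ ((H₀.union H₁).deleteVerts S').verts := by
      simp only [FinGraph.deleteVerts, Finset.mem_sdiff]
      exact ⟨hxin, fun hc => hxS (Finset.mem_inter.1 hc).1⟩
    have hwS' : w ∈ ((H₀.union H₁).deleteVerts S').verts := by
      simp only [FinGraph.deleteVerts, Finset.mem_sdiff]
      exact ⟨hwin, fun hc => hwS (Finset.mem_inter.1 hc).1⟩
    have hwalk := hconn.2 x hxS' w hwS'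
    have main : ∀ a : ℕ,
        Relation.ReflTransGen (fun p q => s(p,q) ∈ ((H₀.union H₁).deleteVerts S').edges) a w →
        a ∈ H₀.verts → a ∉ S → ∃ j : Fin m, u j ∉ S ∧ Reach (H₀.deleteVerts S) a (u j) := by
      intro a h
      induction h using Relation.ReflTransGen.head_induction_on with
      | refl =>
        intro _ _
        exact ⟨jw, by rwa [hjw], by rw [hjw]; exact Relation.ReflTransGen.refl⟩
      | @head a' b' hab htail ih =>
        intro ha haS
        by_cases hau : a' ∈ U
        · obtain ⟨j, _, hj⟩ := Finset.mem_image.1 (hUeq ▸ hau)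
          exact ⟨j, by rwa [hj], by rw [hj]; exact Relation.ReflTransGen.refl⟩
        · have hedge := hab
          rw [mem_deleteVerts_edges] at hedge
          obtain ⟨hmem, haS', hbS'⟩ := hedge
          have hH0e : s(a', b') ∈ H₀.edges := by
            rcases mem_union_edges.1 hmem with h | h
            · exact h
            · exfalso
              have h1 : a' ∈ H₁.verts := hw1.2 _ h a' (by simp)
              exact hau (by rw [← hV01]; exact Finset.mem_inter.2 ⟨ha, h1⟩)
          have hb0 : b' ∈ H₀.verts := hw0.2 _ hH0e b' (by simp)
          have hbS : b' ∉ S := fun hbin =>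
            hbS' (Finset.mem_inter.2 ⟨hbin, Finset.mem_union_left _ hb0⟩)
          obtain ⟨j, hjS, hreach⟩ := ih hb0 hbS
          exact ⟨j, hjS,
            Relation.ReflTransGen.head (mem_deleteVerts_edges.2 ⟨hH0e, haS, hbS⟩) hreach⟩
    exact main x hwalk hx hxS
  -- master connectivity lemma
  have MCGEN : ∀ (G' : FinGraph) (S : Finset ℕ), S.card ≤ 2 →
      G'.verts = G2.verts \ S →
      (∀ a b : ℕ, s(a,b) ∈ H₀.edges → a ∉ S → b ∉ S → s(a,b) ∈ G'.edges) →
      ∀ τ : ℕ, τ ∈ G'.verts →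
      (∀ j : Fin m, u j ∉ S → Reach G' (u j) τ) →
      (hub ∉ S → Reach G' hub τ) →
      G'.Connected := by
    intro G' S hS hverts hedge τ hτ hrim' hhub'
    have key : ∀ a ∈ G'.verts, Reach G' a τ := by
      intro a ha
      rw [hverts, Finset.mem_sdiff] at ha
      obtain ⟨haV, haS⟩ := ha
      rcases Finset.mem_union.1 haV with h0 | h2
      · obtain ⟨j, hjS, hw⟩ := DAGGER S hS a h0 haS
        have hw' : Reach G' a (u j) := by
          apply hw.mono2
          intro x y hxy
          rw [mem_deleteVerts_edges] at hxy
          exact hedge x y hxy.1 hxy.2.1 hxy.2.2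
        exact hw'.trans (hrim' j hjS)
      · rw [hV2] at h2
        rcases Finset.mem_insert.1 h2 with rfl | hju
        · exact hhub' haS
        · obtain ⟨j, _, rfl⟩ := Finset.mem_image.1 hju
          exact hrim' j haS
    refine ⟨⟨τ, hτ⟩, ?_⟩
    intro a ha b hb
    exact (key a ha).trans (key b hb).symm2
  have OFFSET2 : ∀ (a : ℕ) (j : Fin m), ∃ d, d < m ∧ u j = v (a + d) := by
    intro a j
    refine ⟨(j.val + m - a % m) % m, Nat.mod_lt _ hm0, ?_⟩
    rw [huv j]
    apply hvcongr
    have h1 : a % m ≤ j.val + m := le_trans (le_of_lt (Nat.mod_lt _ hm0)) (by omega)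
    calc j.val % m = (j.val + m) % m := by rw [Nat.add_mod_right]
    _ = (a % m + (j.val + m - a % m)) % m := by rw [Nat.add_sub_cancel' h1]
    _ = (a % m + (j.val + m - a % m) % m) % m := by rw [Nat.add_mod_mod]
    _ = (a + (j.val + m - a % m) % m) % m := by rw [Nat.mod_add_mod]
  have G2CONN : FinGraph.KConnected 3 G2 := by
    constructor
    · have hsub : H₂.verts ⊆ G2.verts := Finset.subset_union_right
      have hcard2 : H₂.verts.card = m + 1 := by
        rw [hV2, Finset.card_insert_of_notMem, Finset.card_image_of_injective _ huinj,
          Finset.card_univ, Fintype.card_fin]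
        intro hmem
        obtain ⟨j, _, hj⟩ := Finset.mem_image.1 hmem
        exact hune j hj
      have := Finset.card_le_card hsub
      omega
    · intro S hsubS hcardS
      have hS2 : S.card ≤ 2 := by omega
      by_cases hhubS : hub ∈ S
      · by_cases hks : ∃ k : Fin m, u k ∈ S
        · obtain ⟨k, hkS⟩ := hks
          have hsub' : ({hub, u k} : Finset ℕ) ⊆ S := by
            intro x hx
            rcases Finset.mem_insert.1 hx with rfl | hx
            · exact hhubS
            · rw [Finset.mem_singleton] at hx; subst hx; exact hkS
          have hcard' : S.card ≤ ({hub, u k} : Finset ℕ).card := by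
            rw [Finset.card_pair (Ne.symm (hune k))]; exact hS2
          have hSeq : S = {hub, u k} := (Finset.eq_of_subset_of_card_le hsub' hcard').symm
          have hτS : v (k.val + 1) ∉ S := by
            rw [hSeq]
            intro hc
            rcases Finset.mem_insert.1 hc with h | h
            · exact hvhub _ h
            · rw [Finset.mem_singleton] at h
              rw [huv k] at h
              have h2 : v (k.val + 1) = v (k.val + 0) := by simpa using h
              have := hvadd k.val 1 0 (by omega) (by omega) h2
              omega
          apply MCGEN (G2.deleteVerts S) S hS2 rfl
            (fun a b h1 h2 h3 => hGedge2 S a b (hG2edges.2 (Or.inl h1)) h2 h3) (v (k.val + 1))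
          · simp only [FinGraph.deleteVerts, Finset.mem_sdiff]
            exact ⟨hvverts _, hτS⟩
          · intro j hj
            obtain ⟨d, hd, hjd⟩ := OFFSET2 (k.val + 1) j
            have harc : Reach (G2.deleteVerts S) (v (k.val+1)) (v (k.val+1+d)) := by
              apply ARC2
              intro q hq hqS
              rw [hSeq] at hqS
              rcases Finset.mem_insert.1 hqS with h | h
              · exact hvhub _ h
              · rw [Finset.mem_singleton, huv k] at h
                have h2 : v (k.val + (1+q)) = v (k.val + 0) := by
                  rw [show k.val + (1+q) = k.val+1+q by omega]
                  simpa using h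
                by_cases hqm : 1 + q < m
                · have := hvadd k.val (1+q) 0 hqm (by omega) h2
                  omega
                · have hq1 : q = m - 1 := by omega
                  have hdm : d = m - 1 := by omega
                  apply hj
                  rw [hjd, hdm, show k.val + 1 + (m-1) = k.val + m by omega, hvperiod,
                    ← huv k]
                  exact hkS
            rw [← hjd] at harc
            exact harc.symm2
          · intro hc; exact absurd hhubS hc
        · push_neg at hks
          apply MCGEN (G2.deleteVerts S) S hS2 rfl
            (fun a b h1 h2 h3 => hGedge2 S a b (hG2edges.2 (Or.inl h1)) h2 h3) (v 0)
          · simp only [FinGraph.deleteVerts, Finset.mem_sdiff]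
            refine ⟨hvverts _, ?_⟩
            have h0 := hks ((0:ℕ) : Fin m)
            rwa [huv, hvval, Nat.zero_mod] at h0
          · intro j hj
            obtain ⟨d, hd, hjd⟩ := OFFSET2 j.val ((0 : ℕ) : Fin m)
            have harc := ARC2 S j.val d ?_
            · rw [huv ((0:ℕ) : Fin m), hvval, Nat.zero_mod] at hjd
              rw [← hjd] at harc
              rw [huv j]
              exact harc
            · intro q hq
              have h0 := hks ((j.val + q : ℕ) : Fin m)
              rwa [huv, hvval, hvmod] at h0
          · intro hc; exact absurd hhubS hc
      · apply MCGEN (G2.deleteVerts S) S hS2 rfl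
          (fun a b h1 h2 h3 => hGedge2 S a b (hG2edges.2 (Or.inl h1)) h2 h3) hub
        · simp only [FinGraph.deleteVerts, Finset.mem_sdiff]
          exact ⟨hhubverts, hhubS⟩
        · intro j hj
          apply Reach.single
          have hswap : s(u j, hub) = s(hub, u j) := Sym2.eq_swap
          rw [hswap]
          exact hGedge2 S hub (u j) (by rw [huv]; exact hspokeG2 _) hhubS hj
        · intro _; exact Relation.ReflTransGen.refl
  -- classification of cuts for a deleted rim edge
  have CUT : ∀ (i : Fin m) (S : Finset ℕ), S.card < 3 →
      ¬ ((G2.deleteEdge s(u i, u (i+1))).deleteVerts S).Connected →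
      ∃ k : Fin m, k ≠ i ∧ k ≠ i + 1 ∧ S = {hub, u k} := by
    intro i S hcardS hdisc
    have hS2 : S.card ≤ 2 := by omega
    set t := i.val with htdef
    have he : s(u i, u (i+1)) = s(v t, v (t+1)) := by rw [huv i, husucc i]
    have heH2 : s(u i, u (i+1)) ∈ H₂.edges := by rw [he]; exact hrimH2 t
    have hedgeH0 : ∀ a b : ℕ, s(a,b) ∈ H₀.edges → a ∉ S → b ∉ S →
        s(a,b) ∈ ((G2.deleteEdge s(u i, u (i+1))).deleteVerts S).edges := by
      intro a b h1 h2 h3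
      exact hGedge _ S a b (hG2edges.2 (Or.inl h1)) (fun hq => hH0H2 _ h1 (hq ▸ heH2)) h2 h3
    have hspokene : ∀ j : Fin m, s(hub, u j) ≠ s(u i, u (i+1)) := by
      intro j hq
      rw [he] at hq
      rcases Sym2.eq_iff.1 hq with ⟨hx, _⟩ | ⟨hx, _⟩
      · exact hvhub t hx.symm
      · exact hvhub (t+1) hx.symm
    have hhubS : hub ∈ S := by
      by_contra hhubS
      apply hdisc
      apply MCGEN _ S hS2 rfl hedgeH0 hub
      · simp only [FinGraph.deleteVerts, FinGraph.deleteEdge, Finset.mem_sdiff]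
        exact ⟨hhubverts, hhubS⟩
      · intro j hj
        refine Reach.single ?_
        rw [show s(u j, hub) = s(hub, u j) from Sym2.eq_swap]
        exact hGedge _ S hub (u j) (by rw [huv]; exact hspokeG2 _) (hspokene j) hhubS hj
      · intro _; exact Relation.ReflTransGen.refl
    have hks : ∃ k : Fin m, k ≠ i ∧ k ≠ i + 1 ∧ u k ∈ S := by
      by_contra hno
      push_neg at hno
      apply hdisc
      have hcase : ∀ q : ℕ, v q ∈ S → ((q : Fin m)) = i ∨ ((q : Fin m)) = i + 1 := by
        intro q hq
        by_contra hc
        push_neg at hc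
        exact (hno _ hc.1 hc.2) (by rw [huv, hvval, hvmod]; exact hq)
      by_cases h1 : u (i+1) ∈ S
      · -- target u i, walk each rim vertex forwards to u i
        have h0 : u i ∉ S := by
          intro h0
          have hne1 : u i ≠ u (i+1) := by
            intro hq
            have := hvadd t 0 1 (by omega) (by omega)
              (by rw [huv i, husucc i] at hq; simpa using hq)
            omega
          have hsub3 : ({hub, u i, u (i+1)} : Finset ℕ) ⊆ S := by
            intro x hx
            rcases Finset.mem_insert.1 hx with rfl | hx
            · exact hhubS
            rcases Finset.mem_insert.1 hx with rfl | hx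
            · exact h0
            rw [Finset.mem_singleton] at hx; subst hx; exact h1
          have hc3 : ({hub, u i, u (i+1)} : Finset ℕ).card = 3 := by
            rw [Finset.card_insert_of_notMem, Finset.card_pair hne1]
            intro hc
            rcases Finset.mem_insert.1 hc with hx | hx
            · exact hune i hx.symm
            · rw [Finset.mem_singleton] at hx; exact hune _ hx.symm
          have := Finset.card_le_card hsub3
          omega
        apply MCGEN _ S hS2 rfl hedgeH0 (u i)
        · simp only [FinGraph.deleteVerts, FinGraph.deleteEdge, Finset.mem_sdiff]
          exact ⟨Finset.mem_union_left _ (hU0 i), h0⟩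
        · intro j hj
          obtain ⟨d, hd, hjd⟩ := OFFSET2 j.val i
          have hti : v t = v (j.val + d) := by rw [← huv i]; exact hjd
          have harc : Reach ((G2.deleteEdge s(u i, u (i+1))).deleteVerts S)
              (v j.val) (v (j.val + d)) := by
            apply ARC _ S j.val d
            · intro q hq heq
              rw [he] at heq
              have h2 := hrimeq _ _ heq
              have h3 := hvinj hti
              have h4 : q % m = d % m := hcancel j.val q d (by omega)
              have := hmodsmall (by omega) hd h4
              omega
            · intro q hq hqS
              rcases hcase (j.val + q) hqS with hk | hk
              · -- v (j.val+q) = u i = v (j.val+d) : q = d, so u i ∈ S, contra h0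
                apply h0
                have huq : u ((j.val + q : ℕ) : Fin m) = v (j.val + q) := by
                  rw [huv, hvval, hvmod]
                have h2 : v (j.val + q) = v (j.val + d) := by
                  rw [← huq, hk, huv i]; exact hti
                have hqd := hvadd j.val q d (by omega) hd h2
                subst hqd
                rw [huv i, hti]
                exact hqS
              · -- v (j.val+q) = u (i+1) = v (t+1)
                have h2 : (j.val + q) % m = (t+1) % m := by
                  have huq : u ((j.val + q : ℕ) : Fin m) = v (j.val + q) := by
                    rw [huv, hvval, hvmod]
                  have hx : v (j.val + q) = v (t+1) := by
                    rw [← huq, hk]; exact husucc i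
                  exact hvinj hx
                have h3 := hvinj hti  -- t % m = (j.val + d) % m
                -- j.val + q ≡ j.val + d + 1
                have h4 : (j.val + q) % m = (j.val + (d+1)) % m := by
                  have hstep : (j.val + (d+1)) % m = (t + 1) % m := by
                    rw [show j.val + (d+1) = (j.val + d) + 1 by omega]
                    conv_lhs => rw [← Nat.mod_add_mod, ← h3, Nat.mod_add_mod]
                  rw [hstep]; exact h2
                have h5 : q % m = (d+1) % m := hcancel j.val q (d+1) h4
                by_cases hdm : d + 1 < m
                · have := hmodsmall (by omega) hdm h5
                  omega
                · -- d = m-1, q ≡ 0, q = 0, so u j ∈ S contra hj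
                  have hd1 : d + 1 = m := by omega
                  rw [hd1, Nat.mod_self, Nat.mod_eq_of_lt (by omega : q < m)] at h5
                  subst h5
                  apply hj
                  rw [huv j, ← hvmod, ← hvval ((j.val : ℕ)), Fin.cast_val_eq_self]
                  simpa using hqS
          rw [← huv j, ← hjd] at harc
          exact harc
        · intro hc; exact absurd hhubS hc
      · -- target u (i+1), walk each rim vertex backwards from u (i+1)
        apply MCGEN _ S hS2 rfl hedgeH0 (u (i+1))
        · simp only [FinGraph.deleteVerts, FinGraph.deleteEdge, Finset.mem_sdiff]
          exact ⟨Finset.mem_union_left _ (hU0 _), h1⟩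
        · intro j hj
          obtain ⟨d, hd, hjd⟩ := OFFSET2 (t+1) j
          have harc : Reach ((G2.deleteEdge s(u i, u (i+1))).deleteVerts S)
              (v (t+1)) (v (t+1+d)) := by
            apply ARC _ S (t+1) d
            · intro q hq heq
              rw [he] at heq
              have h2 := hrimeq _ _ heq
              have h3 : (1+q) % m = 0 % m := hcancel t (1+q) 0
                (by rw [show t+(1+q) = t+1+q by omega]; simpa using h2)
              rw [Nat.zero_mod, Nat.mod_eq_of_lt (by omega : 1 + q < m)] at h3
              omega
            · intro q hq hqS
              rcases hcase (t+1+q) hqS with hk | hk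
              · -- = i : 1+q ≡ 0, so q = m-1, d = m-1, then u j = u i etc
                have h2 : (t+1+q) % m = t % m := by
                  have huq : u ((t+1+q : ℕ) : Fin m) = v (t+1+q) := by
                    rw [huv, hvval, hvmod]
                  have hx : v (t+1+q) = v t := by
                    rw [← huq, hk]; exact huv i
                  exact hvinj hx
                have h3 : (1+q) % m = 0 % m := hcancel t (1+q) 0
                  (by rw [show t+(1+q) = t+1+q by omega]; simpa using h2)
                rw [Nat.zero_mod] at h3
                have hq1 : 1 + q = m := by
                  rcases Nat.lt_or_ge (1+q) m with hlt | hge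
                  · rw [Nat.mod_eq_of_lt hlt] at h3; omega
                  · omega
                have hqd : q = d := by omega
                apply hj
                rw [hjd, ← hqd]
                exact hqS
              · -- = i+1 : q ≡ 0, q = 0, vertex = u (i+1) ∈ S contra h1
                have h2 : (t+1+q) % m = (t+1) % m := by
                  have huq : u ((t+1+q : ℕ) : Fin m) = v (t+1+q) := by
                    rw [huv, hvval, hvmod]
                  have hx : v (t+1+q) = v (t+1) := by
                    rw [← huq, hk]; exact husucc i
                  exact hvinj hx
                have h3 : q % m = 0 % m := hcancel (t+1) q 0 (by simpa using h2)
                rw [Nat.zero_mod, Nat.mod_eq_of_lt (by omega : q < m)] at h3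
                subst h3
                apply h1
                rw [husucc i]
                simpa using hqS
          rw [← hjd] at harc
          have harc2 := harc.symm2
          rw [← husucc i] at harc2
          exact harc2
        · intro hc; exact absurd hhubS hc
    obtain ⟨k, hk1, hk2, hkS⟩ := hks
    have hsub' : ({hub, u k} : Finset ℕ) ⊆ S := by
      intro x hx
      rcases Finset.mem_insert.1 hx with rfl | hx
      · exact hhubS
      · rw [Finset.mem_singleton] at hx; subst hx; exact hkS
    have hcard' : S.card ≤ ({hub, u k} : Finset ℕ).card := by
      rw [Finset.card_pair (Ne.symm (hune k))]; exact hS2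
    exact ⟨k, hk1, hk2, (Finset.eq_of_subset_of_card_le hsub' hcard').symm⟩
  have OFFSET1 : ∀ (i k : Fin m), k ≠ i → k ≠ i + 1 →
      ∃ p, 1 ≤ p ∧ p ≤ m - 2 ∧ u k = v (i.val + 1 + p) := by
    intro i k hk1 hk2
    obtain ⟨d, hd, hkd⟩ := OFFSET2 (i.val + 1) k
    refine ⟨d, ?_, ?_, hkd⟩
    · rcases Nat.eq_zero_or_pos d with rfl | h
      · exfalso
        apply hk2
        apply huinj
        rw [hkd, husucc i]
      · omega
    · by_cases hdm : d = m - 1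
      · exfalso
        apply hk1
        apply huinj
        rw [hkd, huv i, hdm, show i.val + 1 + (m-1) = i.val + m by omega, hvperiod]
      · omega
  have NOTREACH : ∀ (i k : Fin m), k ≠ i → k ≠ i + 1 →
      ¬ ((G2.deleteEdge s(u i, u (i+1))).deleteVerts {hub, u k}).Connected →
      ¬ Reach ((G2.deleteEdge s(u i, u (i+1))).deleteVerts {hub, u k}) (u i) (u (i+1)) := by
    intro i k hk1 hk2 hdisc hR
    apply hdisc
    obtain ⟨p, hp1, hp2, hkp⟩ := OFFSET1 i k hk1 hk2
    set t := i.val with htdef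
    set S : Finset ℕ := {hub, u k} with hSdef
    have hhubS : hub ∈ S := Finset.mem_insert_self _ _
    have hkS : u k ∈ S := Finset.mem_insert_of_mem (Finset.mem_singleton_self _)
    have hS2 : S.card ≤ 2 := by
      rw [hSdef]
      exact Finset.card_insert_le _ _ |>.trans (by simp)
    have hSmem : ∀ y, y ∈ S → y = hub ∨ y = u k := by
      intro y hy
      rcases Finset.mem_insert.1 hy with h | h
      · exact Or.inl h
      · exact Or.inr (Finset.mem_singleton.1 h)
    have he : s(u i, u (i+1)) = s(v t, v (t+1)) := by rw [huv i, husucc i]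
    have heH2 : s(u i, u (i+1)) ∈ H₂.edges := by rw [he]; exact hrimH2 t
    have hedgeH0 : ∀ a b : ℕ, s(a,b) ∈ H₀.edges → a ∉ S → b ∉ S →
        s(a,b) ∈ ((G2.deleteEdge s(u i, u (i+1))).deleteVerts S).edges := by
      intro a b h1 h2 h3
      exact hGedge _ S a b (hG2edges.2 (Or.inl h1)) (fun hq => hH0H2 _ h1 (hq ▸ heH2)) h2 h3
    have hR' : Reach ((G2.deleteEdge s(u i, u (i+1))).deleteVerts S) (v t) (v (t+1)) := by
      rw [← huv i, ← husucc i]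
      exact hR
    have huiS : u i ∉ S := by
      intro hc
      rcases hSmem _ hc with h | h
      · exact hune i h
      · exact hk1 (huinj h.symm)
    apply MCGEN _ S hS2 rfl hedgeH0 (u i)
    · simp only [FinGraph.deleteVerts, FinGraph.deleteEdge, Finset.mem_sdiff]
      exact ⟨Finset.mem_union_left _ (hU0 i), huiS⟩
    · intro j hj
      obtain ⟨d, hd, hjd⟩ := OFFSET2 (t+1) j
      have hdnep : d ≠ p := by
        intro hq
        apply hj
        rw [hjd, hq, ← hkp]
        exact hkS
      rcases Nat.lt_or_ge d p with hdp | hdp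
      · -- forward from v (t+1) by d steps
        have harc : Reach ((G2.deleteEdge s(u i, u (i+1))).deleteVerts S)
            (v (t+1)) (v (t+1+d)) := by
          apply ARC _ S (t+1) d
          · intro q hq heq
            rw [he] at heq
            have h2 := hrimeq _ _ heq
            have h3 : (1+q) % m = 0 % m := hcancel t (1+q) 0
              (by rw [show t+(1+q) = t+1+q by omega]; simpa using h2)
            rw [Nat.zero_mod, Nat.mod_eq_of_lt (by omega : 1 + q < m)] at h3
            omega
          · intro q hq hqS
            rcases hSmem _ hqS with h | h
            · exact hvhub _ h
            · rw [hkp] at h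
              have := hvadd (t+1) q p (by omega) (by omega) h
              omega
        rw [← hjd] at harc
        have hfin := harc.symm2.trans hR'.symm2
        rw [← huv i] at hfin
        exact hfin
      · -- backward: from v (t+1+d) forward  to v (t+m) = v t
        have hdp' : p < d := by omega
        have harc : Reach ((G2.deleteEdge s(u i, u (i+1))).deleteVerts S)
            (v (t+1+d)) (v (t+1+d + (m-1-d))) := by
          apply ARC _ S (t+1+d) (m-1-d)
          · intro q hq heq
            rw [he] at heq
            have h2 := hrimeq _ _ heq
            have h3 : (1+d+q) % m = 0 % m := hcancel t (1+d+q) 0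
              (by rw [show t+(1+d+q) = t+1+d+q by omega]; simpa using h2)
            rw [Nat.zero_mod, Nat.mod_eq_of_lt (by omega : 1 + d + q < m)] at h3
            omega
          · intro q hq hqS
            rcases hSmem _ hqS with h | h
            · exact hvhub _ h
            · rw [hkp] at h
              have h2 : v (t+1+(d+q)) = v (t+1+p) := by
                rw [show t+1+(d+q) = t+1+d+q by omega]; exact h
              have := hvadd (t+1) (d+q) p (by omega) (by omega) h2
              omega
        rw [show t+1+d + (m-1-d) = t + m by omega, hvperiod] at harc
        rw [← hjd, ← huv i] at harc
        exact harc
    · intro hc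
      exact absurd hhubS hc
  have hrimNextfin : ∀ i : Fin m, rimNext i = i + 1 := by
    intro i
    apply Fin.ext
    rw [hval_add_one]
    rfl
  -- suppose no rim edge is deletable
  by_contra hfail
  push_neg at hfail
  have hKne1 : ∀ (i : Fin m) (p : ℕ), 1 ≤ p → p ≤ m - 2 →
      ((i.val + 1 + p : ℕ) : Fin m) ≠ i := by
    intro i p h1 h2 hq
    have h3 := congrArg Fin.val hq
    rw [hvval] at h3
    have h4 : (i.val + (1+p)) % m = (i.val + 0) % m := by
      rw [show i.val + (1+p) = i.val+1+p by omega, h3, Nat.add_zero,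
        Nat.mod_eq_of_lt i.isLt]
    have h5 := hcancel _ _ _ h4
    rw [Nat.zero_mod, Nat.mod_eq_of_lt (by omega : 1+p < m)] at h5
    omega
  have hKne2 : ∀ (i : Fin m) (p : ℕ), 1 ≤ p → p ≤ m - 2 →
      ((i.val + 1 + p : ℕ) : Fin m) ≠ i + 1 := by
    intro i p h1 h2 hq
    have h3 := congrArg Fin.val hq
    rw [hvval, hval_add_one] at h3
    have h4 : ((i.val+1) + p) % m = ((i.val+1) + 0) % m := by
      rw [Nat.add_zero]
      exact h3
    have h5 := hcancel _ _ _ h4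
    rw [Nat.zero_mod, Nat.mod_eq_of_lt (by omega : p < m)] at h5
    omega
  have hUK : ∀ (a : ℕ), u ((a : ℕ) : Fin m) = v a := by
    intro a; rw [huv, hvval, hvmod]
  have hP : ∀ i : Fin m, ∃ p : ℕ, 1 ≤ p ∧ p ≤ m - 2 ∧
      ¬ ((G2.deleteEdge s(u i, u (i+1))).deleteVerts {hub, v (i.val + 1 + p)}).Connected := by
    intro i
    have h := hfail i
    rw [hrimNextfin i] at h
    have hnc : ¬ (∀ S : Finset ℕ, S ⊆ (G2.deleteEdge s(u i, u (i+1))).verts → S.card < 3 →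
        ((G2.deleteEdge s(u i, u (i+1))).deleteVerts S).Connected) := by
      intro hall
      exact h ⟨G2CONN.1, hall⟩
    push_neg at hnc
    obtain ⟨S, hsubS, hcardS, hdisc⟩ := hnc
    obtain ⟨k, hk1, hk2, hSeq⟩ := CUT i S hcardS hdisc
    obtain ⟨p, hp1, hp2, hkp⟩ := OFFSET1 i k hk1 hk2
    refine ⟨p, hp1, hp2, ?_⟩
    rw [← hkp, ← hSeq]
    exact hdisc
  set pf : Fin m → ℕ := fun i => Classical.choose (hP i) with hpfdef
  have hpfspec : ∀ i : Fin m, 1 ≤ pf i ∧ pf i ≤ m - 2 ∧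
      ¬ ((G2.deleteEdge s(u i, u (i+1))).deleteVerts {hub, v (i.val + 1 + pf i)}).Connected :=
    fun i => Classical.choose_spec (hP i)
  obtain ⟨i0, -, hmin⟩ := Finset.exists_min_image Finset.univ pf ⟨⟨0, hm0⟩, Finset.mem_univ _⟩
  set Gv : ℕ → ℕ → FinGraph := fun tc pc =>
    (G2.deleteEdge s(v tc, v (tc+1))).deleteVerts {hub, v (tc+1+pc)} with hGvdef
  have hNRv : ∀ i : Fin m,
      ¬ Reach (Gv i.val (pf i)) (v i.val) (v (i.val+1)) := by
    intro i
    have hd := (hpfspec i).2.2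
    have hk1 := hKne1 i (pf i) (hpfspec i).1 (hpfspec i).2.1
    have hk2 := hKne2 i (pf i) (hpfspec i).1 (hpfspec i).2.1
    have hd' : ¬ ((G2.deleteEdge s(u i, u (i+1))).deleteVerts
        {hub, u ((i.val+1+pf i : ℕ) : Fin m)}).Connected := by
      rw [hUK (i.val+1+pf i)]; exact hd
    have hres := NOTREACH i _ hk1 hk2 hd'
    rw [hUK (i.val+1+pf i), huv i, husucc i] at hres
    exact hres
  -- generic facts about the side of a cut
  have hSv : ∀ (tc pc : ℕ) (y : ℕ), y ∈ ({hub, v (tc+1+pc)} : Finset ℕ) →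
      y = hub ∨ y = v (tc+1+pc) := by
    intro tc pc y hy
    rcases Finset.mem_insert.1 hy with h | h
    · exact Or.inl h
    · exact Or.inr (Finset.mem_singleton.1 h)
  have hxSmem : ∀ (tc pc : ℕ), v (tc+1+pc) ∈ ({hub, v (tc+1+pc)} : Finset ℕ) :=
    fun tc pc => Finset.mem_insert_of_mem (Finset.mem_singleton_self _)
  have hhubSmem : ∀ (tc pc : ℕ), hub ∈ ({hub, v (tc+1+pc)} : Finset ℕ) :=
    fun tc pc => Finset.mem_insert_self _ _
  have GNS : ∀ (tc pc : ℕ) (base y : ℕ), base ∉ ({hub, v (tc+1+pc)} : Finset ℕ) →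
      base ∈ G2.verts → Reach (Gv tc pc) base y →
      y ∉ ({hub, v (tc+1+pc)} : Finset ℕ) ∧ y ∈ G2.verts := by
    intro tc pc base y hb hbv hr
    induction hr with
    | refl => exact ⟨hb, hbv⟩
    | tail hstep hedge ih =>
      simp only [hGvdef] at hedge
      have h1 := mem_deleteVerts_edges.1 hedge
      have h2 := mem_deleteEdge_edges.1 h1.1
      exact ⟨h1.2.2, hwG2.2 _ h2.2 _ (by simp)⟩
  have GCLOS : ∀ (tc pc : ℕ) (base a b : ℕ), Reach (Gv tc pc) base a →
      s(a,b) ∈ G2.edges → s(a,b) ≠ s(v tc, v (tc+1)) →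
      b ∉ ({hub, v (tc+1+pc)} : Finset ℕ) → a ∉ ({hub, v (tc+1+pc)} : Finset ℕ) →
      Reach (Gv tc pc) base b := by
    intro tc pc base a b hr hmem hne hbS haS
    refine hr.tail ?_
    simp only [hGvdef]
    exact hGedge _ _ _ _ hmem hne haS hbS
  have GARC1 : ∀ (tc pc : ℕ), 1 ≤ pc → pc ≤ m - 2 → ∀ r, r < pc →
      Reach (Gv tc pc) (v (tc+1)) (v (tc+1+r)) := by
    intro tc pc h1 h2 r hr
    simp only [hGvdef]
    apply ARC
    · intro q hq heq
      have h3 := hrimeq _ _ heq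
      have h4 : (1+q) % m = 0 % m := hcancel tc (1+q) 0
        (by rw [show tc+(1+q) = tc+1+q by omega]; simpa using h3)
      rw [Nat.zero_mod, Nat.mod_eq_of_lt (by omega : 1+q < m)] at h4
      omega
    · intro q hq hqS
      rcases hSv _ _ _ hqS with h | h
      · exact hvhub _ h
      · have := hvadd (tc+1) q pc (by omega) (by omega) h
        omega
  have GARC2 : ∀ (tc pc : ℕ), 1 ≤ pc → pc ≤ m - 2 → ∀ s', pc + 2 ≤ s' → s' ≤ m →
      Reach (Gv tc pc) (v tc) (v (tc + s')) := by
    intro tc pc h1 h2 s' hs1 hs2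
    have harc : Reach (Gv tc pc) (v (tc+s')) (v (tc+s'+(m-s'))) := by
      simp only [hGvdef]
      apply ARC
      · intro q hq heq
        have h3 := hrimeq _ _ heq
        have h4 : (s'+q) % m = 0 % m := hcancel tc (s'+q) 0
          (by rw [show tc+(s'+q) = tc+s'+q by omega]; simpa using h3)
        rw [Nat.zero_mod, Nat.mod_eq_of_lt (by omega : s'+q < m)] at h4
        omega
      · intro q hq hqS
        rcases hSv _ _ _ hqS with h | h
        · exact hvhub _ h
        · have h5 : v (tc+(s'+q)) = v (tc+(1+pc)) := by
            rw [show tc+(s'+q) = tc+s'+q by omega, show tc+(1+pc) = tc+1+pc by omega]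
            exact h
          by_cases hq2 : s' + q < m
          · have := hvadd tc (s'+q) (1+pc) hq2 (by omega) h5
            omega
          · have hqm : s' + q = m := by omega
            rw [hqm, hvperiod] at h5
            have h6 : v (tc + 0) = v (tc+(1+pc)) := by
              rw [Nat.add_zero]; exact h5
            have := hvadd tc 0 (1+pc) (by omega) (by omega) h6
            omega
    rw [show tc+s'+(m-s') = tc + m by omega, hvperiod] at harc
    exact harc.symm2
  -- set up the minimal cut
  set t := i0.val with htdef
  set l := pf i0 with hldef
  have hl1 : 1 ≤ l := (hpfspec i0).1
  have hl2 : l ≤ m - 2 := (hpfspec i0).2.1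
  have hnr1 : ¬ Reach (Gv t l) (v t) (v (t+1)) := hNRv i0
  have hArcP : ∀ r, r < l → Reach (Gv t l) (v (t+1)) (v (t+1+r)) := GARC1 t l hl1 hl2
  have hArcQ : ∀ s', l+2 ≤ s' → s' ≤ m → Reach (Gv t l) (v t) (v (t+s')) := GARC2 t l hl1 hl2
  have hv1S : v (t+1) ∉ ({hub, v (t+1+l)} : Finset ℕ) := by
    intro hc
    rcases hSv _ _ _ hc with h | h
    · exact hvhub _ h
    · have h2 : v ((t+1) + 0) = v ((t+1) + l) := by rw [Nat.add_zero]; exact h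
      have := hvadd (t+1) 0 l (by omega) (by omega) h2
      omega
  have hvtS : v t ∉ ({hub, v (t+1+l)} : Finset ℕ) := by
    intro hc
    rcases hSv _ _ _ hc with h | h
    · exact hvhub _ h
    · have h2 : v (t + 0) = v (t + (1+l)) := by
        rw [Nat.add_zero, show t + (1+l) = t+1+l by omega]; exact h
      have := hvadd t 0 (1+l) (by omega) (by omega) h2
      omega
  have hBfact : ∀ y, Reach (Gv t l) (v (t+1)) y →
      y ∉ ({hub, v (t+1+l)} : Finset ℕ) ∧ y ∈ G2.verts :=
    fun y h => GNS t l _ y hv1S (hvverts _) h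
  have hABdisj : ∀ y, Reach (Gv t l) (v t) y → Reach (Gv t l) (v (t+1)) y → False :=
    fun y h1 h2 => hnr1 (h1.trans h2.symm2)
  have hUB : ∀ j : Fin m, Reach (Gv t l) (v (t+1)) (u j) →
      ∃ r, r < l ∧ u j = v (t+1+r) := by
    intro j hj
    obtain ⟨d, hd, hjd⟩ := OFFSET2 (t+1) j
    rcases Nat.lt_or_ge d l with h | h
    · exact ⟨d, h, hjd⟩
    exfalso
    rcases Nat.eq_or_lt_of_le h with h2 | h2
    · have := (hBfact _ hj).1
      rw [hjd, ← h2] at this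
      exact this (hxSmem t l)
    · have harc := hArcQ (d+1) (by omega) (by omega)
      rw [show t + (d+1) = t+1+d by omega] at harc
      rw [hjd] at hj
      exact hABdisj _ harc hj
  -- the fourth edge at v (t+1)
  have hUv : v (t+1) ∈ U := by rw [hvdef]; exact hjU _
  have FOURTH : ∃ y : ℕ, y ≠ v (t+1) ∧ s(v (t+1), y) ∈ G2.edges ∧
      s(v (t+1), y) ≠ s(hub, v (t+1)) ∧ s(v (t+1), y) ≠ s(v t, v (t+1)) ∧
      s(v (t+1), y) ≠ s(v (t+1), v (t+1+1)) := by
    have hdeg4 : 4 ≤ (G2.edges.filter (fun e => v (t+1) ∈ e)).card := hdeg _ hUv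
    set T : Finset (Sym2 ℕ) :=
      {s(hub, v (t+1)), s(v t, v (t+1)), s(v (t+1), v (t+1+1))} with hTdef
    have hTsub : T ⊆ G2.edges.filter (fun e => v (t+1) ∈ e) := by
      intro g hg
      rw [Finset.mem_filter]
      rcases Finset.mem_insert.1 hg with rfl | hg
      · exact ⟨hspokeG2 (t+1), by simp⟩
      rcases Finset.mem_insert.1 hg with rfl | hg
      · exact ⟨hrimG2 t, by simp⟩
      rw [Finset.mem_singleton] at hg
      subst hg
      exact ⟨hrimG2 (t+1), by simp⟩
    have hTcard : T.card ≤ 3 := by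
      refine le_trans (Finset.card_insert_le _ _) ?_
      have h2 := Finset.card_insert_le s(v t, v (t+1)) ({s(v (t+1), v (t+1+1))} : Finset (Sym2 ℕ))
      simp only [Finset.card_singleton] at h2
      omega
    have hex : ∃ g ∈ G2.edges.filter (fun e => v (t+1) ∈ e), g ∉ T := by
      by_contra hcon
      push_neg at hcon
      have := Finset.card_le_card hcon
      omega
    obtain ⟨g, hgf, hgT⟩ := hex
    rw [Finset.mem_filter] at hgf
    obtain ⟨y, hy⟩ := Sym2.mem_iff_exists.1 hgf.2
    subst hy
    refine ⟨y, ?_, hgf.1, ?_, ?_, ?_⟩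
    · intro hq
      have hdiag := hwG2.1 _ hgf.1
      rw [hq] at hdiag
      exact hdiag (Sym2.mk_isDiag_iff.2 rfl)
    · intro hq; exact hgT (by rw [hq]; exact Finset.mem_insert_self _ _)
    · intro hq
      exact hgT (by rw [hq]; exact Finset.mem_insert_of_mem (Finset.mem_insert_self _ _))
    · intro hq
      exact hgT (by
        rw [hq]
        exact Finset.mem_insert_of_mem (Finset.mem_insert_of_mem (Finset.mem_singleton_self _)))
  rcases Nat.eq_or_lt_of_le hl1 with hl1' | hl2'
  · -- l = 1
    by_cases hz : ∀ z, Reach (Gv t l) (v (t+1)) z → z = v (t+1)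
    · obtain ⟨y, hyne, hymem, hne1, hne2, hne3⟩ := FOURTH
      have hyhub : y ≠ hub := by
        intro hq
        apply hne1
        rw [hq]
        exact Sym2.eq_swap
      have hyx : y ≠ v (t+1+l) := by
        intro hq
        apply hne3
        rw [hq, ← hl1']
      have hyS : y ∉ ({hub, v (t+1+l)} : Finset ℕ) := by
        intro hc
        rcases hSv _ _ _ hc with h | h
        · exact hyhub h
        · exact hyx h
      have hBy : Reach (Gv t l) (v (t+1)) y :=
        GCLOS t l _ _ _ Relation.ReflTransGen.refl hymem hne2 hyS hv1S
      exact hyne (hz y hBy)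
    · push_neg at hz
      obtain ⟨z, hzB, hzne⟩ := hz
      have hpairne : v (t+1) ≠ v (t+1+l) := by
        intro hq
        have h2 : v ((t+1)+0) = v ((t+1)+l) := by rw [Nat.add_zero]; exact hq
        have := hvadd (t+1) 0 l (by omega) (by omega) h2
        omega
      have hcut := G2CONN.2 {v (t+1), v (t+1+l)} ?_ ?_
      rotate_left
      · intro x hx
        rcases Finset.mem_insert.1 hx with rfl | hx
        · exact hvverts _
        · rw [Finset.mem_singleton] at hx; subst hx; exact hvverts _
      · rw [Finset.card_pair hpairne]; omega
      have hzmem : z ∈ (G2.deleteVerts {v (t+1), v (t+1+l)}).verts := by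
        simp only [FinGraph.deleteVerts, Finset.mem_sdiff]
        refine ⟨(hBfact z hzB).2, ?_⟩
        intro hc
        rcases Finset.mem_insert.1 hc with h | h
        · exact hzne h
        · rw [Finset.mem_singleton] at h
          exact (hBfact z hzB).1 (h ▸ hxSmem t l)
      have hhubmem : hub ∈ (G2.deleteVerts {v (t+1), v (t+1+l)}).verts := by
        simp only [FinGraph.deleteVerts, Finset.mem_sdiff]
        refine ⟨hhubverts, ?_⟩
        intro hc
        rcases Finset.mem_insert.1 hc with h | h
        · exact hvhub _ h.symm
        · rw [Finset.mem_singleton] at h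
          exact hvhub _ h.symm
      have hwalk := hcut.2 z hzmem hub hhubmem
      have hinv : ∀ y : ℕ,
          Relation.ReflTransGen
            (fun a b => s(a,b) ∈ (G2.deleteVerts {v (t+1), v (t+1+l)}).edges) z y →
          Reach (Gv t l) (v (t+1)) y ∧ y ≠ v (t+1) := by
        intro y hy
        induction hy with
        | refl => exact ⟨hzB, hzne⟩
        | @tail b c hbc hedge ih =>
          rw [mem_deleteVerts_edges] at hedge
          obtain ⟨hmemG, hbP, hcP⟩ := hedge
          obtain ⟨hBb, hbw⟩ := ih
          have hbS := (hBfact b hBb).1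
          have hbhub : b ≠ hub := fun hq => hbS (hq ▸ hhubSmem t l)
          have hchub : c ≠ hub := by
            intro hq
            subst hq
            obtain ⟨j, hj⟩ := hhubedge _ hmemG (by simp)
            have hbj : b = u j := by
              rcases Sym2.eq_iff.1 hj with ⟨h1, h2⟩ | ⟨h1, h2⟩
              · exact absurd h1 hbhub
              · exact h1
            obtain ⟨r, hr, hjr⟩ := hUB j (hbj ▸ hBb)
            have hr0 : r = 0 := by omega
            apply hbw
            rw [hbj, hjr, hr0]
          have hcS : c ∉ ({hub, v (t+1+l)} : Finset ℕ) := by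
            intro hc2
            rcases hSv _ _ _ hc2 with h | h
            · exact hchub h
            · exact hcP (by
                rw [h]; exact Finset.mem_insert_of_mem (Finset.mem_singleton_self _))
          have hnee : s(b, c) ≠ s(v t, v (t+1)) := by
            intro hq
            have hbmem : b ∈ s(v t, v (t+1)) := by rw [← hq]; simp
            rw [Sym2.mem_iff] at hbmem
            rcases hbmem with h | h
            · refine hABdisj b ?_ hBb
              rw [h]
              exact Relation.ReflTransGen.refl
            · exact hbw h
          refine ⟨GCLOS t l _ _ _ hBb hmemG hnee hcS hbS, ?_⟩
          intro hq
          exact hcP (by rw [hq]; exact Finset.mem_insert_self _ _)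
      have hfin := (hinv hub hwalk).1
      exact (hBfact hub hfin).1 (hhubSmem t l)
  · -- l ≥ 2 : use the cut of the next rim edge
    set p' := pf (i0 + 1) with hp'def
    have hp'1 : 1 ≤ p' := (hpfspec (i0+1)).1
    have hp'2 : p' ≤ m - 2 := (hpfspec (i0+1)).2.1
    have hlp' : l ≤ p' := hmin (i0+1) (Finset.mem_univ _)
    have hval1 : (i0+1).val = (t+1) % m := hval_add_one i0
    have he1 : v ((i0+1).val) = v (t+1) := by
      apply hvcongr
      rw [hval1, Nat.mod_mod_of_dvd _ dvd_rfl]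
    have he2 : v ((i0+1).val + 1) = v (t+1+1) := by
      apply hvcongr
      rw [hval1, Nat.mod_add_mod]
    have he3 : v ((i0+1).val + 1 + p') = v (t+1+1+p') := by
      apply hvcongr
      rw [hval1, show (t+1) % m + 1 + p' = (t+1) % m + (1+p') by omega, Nat.mod_add_mod,
        show t+1+(1+p') = t+1+1+p' by omega]
    have hGv1 : Gv ((i0+1).val) p' = Gv (t+1) p' := by
      simp only [hGvdef]
      rw [he1, he2, he3]
    have hnr2 : ¬ Reach (Gv (t+1) p') (v (t+1)) (v (t+1+1)) := by
      have h := hNRv (i0+1)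
      rw [hGv1, he1, he2] at h
      exact h
    have hArcD : ∀ r, r < p' → Reach (Gv (t+1) p') (v (t+1+1)) (v (t+1+1+r)) :=
      GARC1 (t+1) p' hp'1 hp'2
    have hv1S' : v (t+1) ∉ ({hub, v (t+1+1+p')} : Finset ℕ) := by
      intro hc
      rcases hSv _ _ _ hc with h | h
      · exact hvhub _ h
      · have h2 : v ((t+1)+0) = v ((t+1)+(1+p')) := by
          rw [Nat.add_zero, show (t+1)+(1+p') = t+1+1+p' by omega]; exact h
        have := hvadd (t+1) 0 (1+p') (by omega) (by omega) h2
        omega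
    have hCfact : ∀ y, Reach (Gv (t+1) p') (v (t+1)) y →
        y ∉ ({hub, v (t+1+1+p')} : Finset ℕ) ∧ y ∈ G2.verts :=
      fun y h => GNS (t+1) p' _ y hv1S' (hvverts _) h
    have hCDdisj : ∀ y, Reach (Gv (t+1) p') (v (t+1)) y →
        Reach (Gv (t+1) p') (v (t+1+1)) y → False :=
      fun y h1 h2 => hnr2 (h1.trans h2.symm2)
    have hxD : Reach (Gv (t+1) p') (v (t+1+1)) (v (t+1+l)) := by
      have h := hArcD (l-1) (by omega)
      rw [show t+1+1+(l-1) = t+1+l by omega] at h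
      exact h
    have hPinD : ∀ r, 1 ≤ r → r < l → Reach (Gv (t+1) p') (v (t+1+1)) (v (t+1+r)) := by
      intro r h1 h2
      have h := hArcD (r-1) (by omega)
      rw [show t+1+1+(r-1) = t+1+r by omega] at h
      exact h
    have hxnotC : ¬ Reach (Gv (t+1) p') (v (t+1)) (v (t+1+l)) :=
      fun hc => hCDdisj _ hc hxD
    have hx'notB : ¬ Reach (Gv t l) (v (t+1)) (v (t+1+1+p')) := by
      intro hc
      have hu : u ((t+1+1+p' : ℕ) : Fin m) = v (t+1+1+p') := hUK _
      obtain ⟨r, hr, hjr⟩ := hUB _ (by rw [hu]; exact hc)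
      have h5 : v ((t+1)+(1+p')) = v ((t+1)+r) := by
        rw [show (t+1)+(1+p') = t+1+1+p' by omega, ← hu, hjr]
      have := hvadd (t+1) (1+p') r (by omega) (by omega) h5
      omega
    have hx'x : v (t+1+1+p') ≠ v (t+1+l) := by
      intro hq
      have h5 : v ((t+1)+(1+p')) = v ((t+1)+l) := by
        rw [show (t+1)+(1+p') = t+1+1+p' by omega]; exact hq
      have := hvadd (t+1) (1+p') l (by omega) (by omega) h5
      omega
    have hxnotS' : v (t+1+l) ∉ ({hub, v (t+1+1+p')} : Finset ℕ) := by
      intro hc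
      rcases hSv _ _ _ hc with h | h
      · exact hvhub _ h
      · exact hx'x h.symm
    have hx'notS : v (t+1+1+p') ∉ ({hub, v (t+1+l)} : Finset ℕ) := by
      intro hc
      rcases hSv _ _ _ hc with h | h
      · exact hvhub _ h
      · exact hx'x h
    have hUZ : ∀ j : Fin m, Reach (Gv t l) (v (t+1)) (u j) →
        Reach (Gv (t+1) p') (v (t+1)) (u j) → u j = v (t+1) := by
      intro j h1 h2
      obtain ⟨r, hr, hjr⟩ := hUB j h1
      rcases Nat.eq_zero_or_pos r with rfl | hr1
      · simpa using hjr
      · exfalso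
        apply hCDdisj (u j) h2
        rw [hjr]
        exact hPinD r hr1 hr
    have hCL : ∀ a b : ℕ, Reach (Gv t l) (v (t+1)) a → Reach (Gv (t+1) p') (v (t+1)) a →
        a ≠ v (t+1) → s(a,b) ∈ G2.edges → b ≠ v (t+1) →
        Reach (Gv t l) (v (t+1)) b ∧ Reach (Gv (t+1) p') (v (t+1)) b := by
      intro a b hB hC hav hmem hbv
      have haS := (hBfact a hB).1
      have haS' := (hCfact a hC).1
      have hahub : a ≠ hub := fun hq => haS (hq ▸ hhubSmem t l)
      have hat : a ≠ v t := by
        intro hq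
        refine hABdisj a ?_ hB
        rw [hq]
        exact Relation.ReflTransGen.refl
      have hat2 : a ≠ v (t+1+1) := by
        intro hq
        refine hCDdisj a hC ?_
        rw [hq]
        exact Relation.ReflTransGen.refl
      have hne_e : s(a,b) ≠ s(v t, v (t+1)) := by
        intro hq
        have hamem : a ∈ s(v t, v (t+1)) := by rw [← hq]; simp
        rw [Sym2.mem_iff] at hamem
        rcases hamem with h | h
        · exact hat h
        · exact hav h
      have hne_f : s(a,b) ≠ s(v (t+1), v (t+1+1)) := by
        intro hq
        have hamem : a ∈ s(v (t+1), v (t+1+1)) := by rw [← hq]; simp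
        rw [Sym2.mem_iff] at hamem
        rcases hamem with h | h
        · exact hav h
        · exact hat2 h
      have hbhub : b ≠ hub := by
        intro hq
        subst hq
        obtain ⟨j, hj⟩ := hhubedge _ hmem (by simp)
        have haj : a = u j := by
          rcases Sym2.eq_iff.1 hj with ⟨h1, h2⟩ | ⟨h1, h2⟩
          · exact absurd h1 hahub
          · exact h1
        subst haj
        exact hav (hUZ j hB hC)
      have hbx : b ≠ v (t+1+l) := by
        intro hq
        apply hxnotC
        rw [← hq]
        exact GCLOS (t+1) p' _ a b hC hmem hne_f (by rw [hq]; exact hxnotS') haS'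
      have hbx' : b ≠ v (t+1+1+p') := by
        intro hq
        apply hx'notB
        rw [← hq]
        exact GCLOS t l _ a b hB hmem hne_e (by rw [hq]; exact hx'notS) haS
      have hbS : b ∉ ({hub, v (t+1+l)} : Finset ℕ) := by
        intro hc
        rcases hSv _ _ _ hc with h | h
        · exact hbhub h
        · exact hbx h
      have hbS' : b ∉ ({hub, v (t+1+1+p')} : Finset ℕ) := by
        intro hc
        rcases hSv _ _ _ hc with h | h
        · exact hbhub h
        · exact hbx' h
      exact ⟨GCLOS t l _ a b hB hmem hne_e hbS haS,
        GCLOS (t+1) p' _ a b hC hmem hne_f hbS' haS'⟩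
    by_cases hz : ∀ z, Reach (Gv t l) (v (t+1)) z → Reach (Gv (t+1) p') (v (t+1)) z →
        z = v (t+1)
    · obtain ⟨y, hyne, hymem, hne1, hne2, hne3⟩ := FOURTH
      have hyhub : y ≠ hub := by
        intro hq
        apply hne1
        rw [hq]
        exact Sym2.eq_swap
      have hyx : y ≠ v (t+1+l) := by
        intro hq
        apply hxnotC
        rw [← hq]
        exact GCLOS (t+1) p' _ _ _ Relation.ReflTransGen.refl hymem hne3
          (by rw [hq]; exact hxnotS') hv1S'
      have hyx' : y ≠ v (t+1+1+p') := by
        intro hq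
        apply hx'notB
        rw [← hq]
        exact GCLOS t l _ _ _ Relation.ReflTransGen.refl hymem hne2
          (by rw [hq]; exact hx'notS) hv1S
      have hyS : y ∉ ({hub, v (t+1+l)} : Finset ℕ) := by
        intro hc
        rcases hSv _ _ _ hc with h | h
        · exact hyhub h
        · exact hyx h
      have hyS' : y ∉ ({hub, v (t+1+1+p')} : Finset ℕ) := by
        intro hc
        rcases hSv _ _ _ hc with h | h
        · exact hyhub h
        · exact hyx' h
      have hBy : Reach (Gv t l) (v (t+1)) y :=
        GCLOS t l _ _ _ Relation.ReflTransGen.refl hymem hne2 hyS hv1S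
      have hCy : Reach (Gv (t+1) p') (v (t+1)) y :=
        GCLOS (t+1) p' _ _ _ Relation.ReflTransGen.refl hymem hne3 hyS' hv1S'
      exact hyne (hz y hBy hCy)
    · push_neg at hz
      obtain ⟨z, hzB, hzC, hzne⟩ := hz
      have hcut := G2CONN.2 {v (t+1)} ?_ ?_
      rotate_left
      · intro x hx
        rw [Finset.mem_singleton] at hx; subst hx; exact hvverts _
      · rw [Finset.card_singleton]; omega
      have hzmem : z ∈ (G2.deleteVerts {v (t+1)}).verts := by
        simp only [FinGraph.deleteVerts, Finset.mem_sdiff, Finset.mem_singleton]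
        exact ⟨(hBfact z hzB).2, hzne⟩
      have hhubmem : hub ∈ (G2.deleteVerts {v (t+1)}).verts := by
        simp only [FinGraph.deleteVerts, Finset.mem_sdiff, Finset.mem_singleton]
        exact ⟨hhubverts, fun hq => hvhub _ hq.symm⟩
      have hwalk := hcut.2 z hzmem hub hhubmem
      have hinv : ∀ y : ℕ,
          Relation.ReflTransGen
            (fun a b => s(a,b) ∈ (G2.deleteVerts {v (t+1)}).edges) z y →
          (Reach (Gv t l) (v (t+1)) y ∧ Reach (Gv (t+1) p') (v (t+1)) y) ∧ y ≠ v (t+1) := by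
        intro y hy
        induction hy with
        | refl => exact ⟨⟨hzB, hzC⟩, hzne⟩
        | @tail b c hbc hedge ih =>
          rw [mem_deleteVerts_edges] at hedge
          obtain ⟨hmemG, hbP, hcP⟩ := hedge
          obtain ⟨⟨hBb, hCb⟩, hbw⟩ := ih
          rw [Finset.mem_singleton] at hcP
          exact ⟨hCL b c hBb hCb hbw hmemG hcP, hcP⟩
      have hfin := ((hinv hub hwalk).1).1
      exact (hBfact hub hfin).1 (hhubSmem t l)
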